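/- For χ ∈ Δ^ℂ_{p,q}, the algebraic Dirac p-form vanishes exactly at the zero spinor: α^p_χ = 0 if and only if χ = 0. -/

import Mathlib

open Complex Matrix

namespace Paper

noncomputable section

/-- The 2×2 generator matrices of Remark 2.1. -/
def matE : Matrix (Fin 2) (Fin 2) ℂ := 1
def matT : Matrix (Fin 2) (Fin 2) ℂ := !![-1, 0; 0, 1]
def matG1 : Matrix (Fin 2) (Fin 2) ℂ := !![0, Complex.I; Complex.I, 0]
def matG2 : Matrix (Fin 2) (Fin 2) ℂ := !![0, -1; 1, 0]

/-- Iterated Kronecker product of 2×2 matrices, realised on the index type `Fin m → Fin 2`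
(the slot `ν` corresponds to the `(ν+1)`-st label of the basis spinors `u(ε₁,…,ε_m)`,
i.e. the Kronecker factors are taken from right to left). -/
def tprod {m : ℕ} (M : Fin m → Matrix (Fin 2) (Fin 2) ℂ) :
    Matrix (Fin m → Fin 2) (Fin m → Fin 2) ℂ :=
  Matrix.of fun a b => ∏ ν, M ν (a ν) (b ν)

/-- `τ_j = 1` if `ε_j = 1` and `τ_j = i` if `ε_j = -1`. -/
def tau {n : ℕ} (ε : Fin n → ℝ) (j : Fin n) : ℂ := if ε j = 1 then 1 else Complex.I

/-- The matrices `Φ_{p,q}(e_i)` of the explicit Clifford representation of Remark 2.1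
(0-based index `i`; the paper's `e_{2j-1}` resp. `e_{2j}` correspond to `i = 2j-2` resp.
`i = 2j-1`, acting by `g₁` resp. `g₂` in slot `j-1`, by `T` in the lower slots and by `E`
in the higher slots).  For odd `n` the last matrix is the first component
`pr₁ ∘ Φ̃ (e_n) = τ_n · (i T ⊗ ⋯ ⊗ T)`. -/
def Phi {n : ℕ} (ε : Fin n → ℝ) (i : Fin n) :
    Matrix (Fin (n / 2) → Fin 2) (Fin (n / 2) → Fin 2) ℂ :=
  tau ε i •
    if i.val < 2 * (n / 2) then
      tprod fun ν : Fin (n / 2) =>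
        if ν.val < i.val / 2 then matT
        else if ν.val = i.val / 2 then (if i.val % 2 = 0 then matG1 else matG2)
        else matE
    else Complex.I • tprod fun _ : Fin (n / 2) => matT

/-- The spinor module `Δ_{p,q} = ℂ^{2^{⌊n/2⌋}}`. -/
abbrev Spinor (n : ℕ) := (Fin (n / 2) → Fin 2) → ℂ

/-- Clifford multiplication by a real vector, as a matrix. -/
def cliffR {n : ℕ} (ε : Fin n → ℝ) (x : Fin n → ℝ) :
    Matrix (Fin (n / 2) → Fin 2) (Fin (n / 2) → Fin 2) ℂ :=
  ∑ i, (x i : ℂ) • Phi ε i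

/-- Clifford multiplication by a complex vector (complex-bilinear extension). -/
def cliffC {n : ℕ} (ε : Fin n → ℝ) (x : Fin n → ℂ) :
    Matrix (Fin (n / 2) → Fin 2) (Fin (n / 2) → Fin 2) ℂ :=
  ∑ i, x i • Phi ε i

/-- The scalar product `⟨x,y⟩_{p,q} = ∑ ε_i x_i y_i` on `ℝⁿ`. -/
def ipR {n : ℕ} (ε : Fin n → ℝ) (x y : Fin n → ℝ) : ℝ := ∑ i, ε i * x i * y i

/-- Its complex-bilinear extension to `ℂⁿ`. -/
def ipC {n : ℕ} (ε : Fin n → ℝ) (x y : Fin n → ℂ) : ℂ := ∑ i, (ε i : ℂ) * x i * y i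

/-- The standard Hermitian scalar product on the spinor module. -/
def stdInner {n : ℕ} (u v : Spinor n) : ℂ := ∑ b, (starRingEnd ℂ) (u b) * v b

/-- Clifford multiplication by the product `e_{i₁} ⋯ e_{i_k}` over a set of indices
`s = {i₁ < … < i_k}`, taken in increasing order. -/
def cliffSet {n : ℕ} (ε : Fin n → ℝ) (s : Finset (Fin n)) :
    Matrix (Fin (n / 2) → Fin 2) (Fin (n / 2) → Fin 2) ℂ :=
  ((s.sort (· ≤ ·)).map (Phi ε)).prod

/-- The set of indices with `ε_i = -1`. -/
def negSet {n : ℕ} (ε : Fin n → ℝ) : Finset (Fin n) := Finset.univ.filter fun i => ε i = -1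

/-- The indefinite spinor inner product `⟨u,v⟩_Δ = d · (e_{i₁} ⋯ e_{i_p} · u, v)`,
where `i₁ < … < i_p` are the indices with `ε = -1`. -/
def sform {n : ℕ} (ε : Fin n → ℝ) (d : ℂ) (u v : Spinor n) : ℂ :=
  d * stdInner ((cliffSet ε (negSet ε)).mulVec u) v

/-- The coefficient `d_{k,p} · ε_{i₁} ⋯ ε_{i_k} · ⟨e_{i₁} ⋯ e_{i_k} · χ, χ⟩_Δ` of the
algebraic Dirac form (`dD` is the constant of the spinor inner product, `dk` is `d_{k,p}`). -/
def dCoeff {n : ℕ} (ε : Fin n → ℝ) (dD dk : ℂ) (s : Finset (Fin n)) (χ : Spinor n) : ℂ :=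
  dk * (∏ i ∈ s, (ε i : ℂ)) * sform ε dD ((cliffSet ε s).mulVec χ) χ

/-- The covector `X^♭ = ⟨X,·⟩_{p,q}`. -/
def flat {n : ℕ} (ε : Fin n → ℝ) (X : Fin n → ℝ) : (Fin n → ℝ) →ₗ[ℝ] ℝ :=
  ∑ i, (ε i * X i) • LinearMap.proj i

/-- The wedge product of `k` one-forms, as an alternating `k`-form. -/
def wedge1 {n k : ℕ} (f : Fin k → ((Fin n → ℝ) →ₗ[ℝ] ℝ)) :
    AlternatingMap ℝ (Fin n → ℝ) ℝ (Fin k) :=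
  (Matrix.detRowAlternating : AlternatingMap ℝ (Fin k → ℝ) ℝ (Fin k)).compLinearMap
    (LinearMap.pi f)

/-- The algebraic Dirac `k`-form
`α^k_χ = d_{k,p} ∑_{i₁<⋯<i_k} ε_{i₁}⋯ε_{i_k} ⟨e_{i₁}⋯e_{i_k}·χ, χ⟩_Δ e^♭_{i₁} ∧ ⋯ ∧ e^♭_{i_k}`
(a real form; the coefficients are real by the choice of the constant `dk = d_{k,p}`). -/
def diracForm {n : ℕ} (ε : Fin n → ℝ) (dD dk : ℂ) (k : ℕ) (χ : Spinor n) :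
    AlternatingMap ℝ (Fin n → ℝ) ℝ (Fin k) :=
  ∑ s : Finset (Fin n),
    if h : s.card = k then
      (dCoeff ε dD dk s χ).re •
        wedge1 fun j => flat ε (Pi.single (s.orderEmbOfFin h j) 1)
    else 0

/-- The wedge product of `j` one-forms with a `(p-j)`-form, as an alternating `p`-form. -/
def wedgeMix {n p j : ℕ} (h : j ≤ p) (f : Fin j → ((Fin n → ℝ) →ₗ[ℝ] ℝ))
    (β : AlternatingMap ℝ (Fin n → ℝ) ℝ (Fin (p - j))) :
    AlternatingMap ℝ (Fin n → ℝ) ℝ (Fin p) :=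
  AlternatingMap.domDomCongr (finSumFinEquiv.trans (finCongr (by omega)))
    ((TensorProduct.lid ℝ ℝ).toLinearMap.compAlternatingMap ((wedge1 f).domCoprod β))

/-- The basis spinor `u(ε₁,…,ε_m)` (encoded by `a : Fin m → Fin 2`, where `a ν = 0`
corresponds to the label `ε_{ν+1} = 1` and `a ν = 1` to `ε_{ν+1} = -1`). -/
def uB (n : ℕ) (a : Fin (n / 2) → Fin 2) : Spinor n := fun b => if b = a then 1 else 0

end

end Paper
namespace Paper

section Aux

-- ### 2×2 matrix identities

lemma matT_sq : matT * matT = 1 := by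
  ext i j; fin_cases i <;> fin_cases j <;>
    simp [matT, Matrix.mul_apply, Fin.sum_univ_two, Matrix.one_apply]

lemma matG1_sq : matG1 * matG1 = -1 := by
  ext i j; fin_cases i <;> fin_cases j <;>
    simp [matG1, Matrix.mul_apply, Fin.sum_univ_two, Matrix.one_apply, Complex.I_mul_I]

lemma matG2_sq : matG2 * matG2 = -1 := by
  ext i j; fin_cases i <;> fin_cases j <;>
    simp [matG2, Matrix.mul_apply, Fin.sum_univ_two, Matrix.one_apply]

lemma matG1_matG2 : matG1 * matG2 = -(matG2 * matG1) := by
  ext i j; fin_cases i <;> fin_cases j <;>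
    simp [matG1, matG2, Matrix.mul_apply, Fin.sum_univ_two]

lemma matG1_matT : matG1 * matT = -(matT * matG1) := by
  ext i j; fin_cases i <;> fin_cases j <;>
    simp [matG1, matT, Matrix.mul_apply, Fin.sum_univ_two]

lemma matG2_matT : matG2 * matT = -(matT * matG2) := by
  ext i j; fin_cases i <;> fin_cases j <;>
    simp [matG2, matT, Matrix.mul_apply, Fin.sum_univ_two]

-- ### tprod lemmas

lemma tprod_mul {m : ℕ} (M N : Fin m → Matrix (Fin 2) (Fin 2) ℂ) :
    tprod M * tprod N = tprod fun ν => M ν * N ν := by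
  ext a b
  simp only [tprod, Matrix.mul_apply, Matrix.of_apply]
  rw [Fintype.prod_sum]
  exact Finset.sum_congr rfl fun c _ => Finset.prod_mul_distrib.symm

lemma tprod_one {m : ℕ} : tprod (fun _ : Fin m => (1 : Matrix (Fin 2) (Fin 2) ℂ)) = 1 := by
  ext a b
  simp [tprod, Matrix.one_apply, Finset.prod_boole, funext_iff]

lemma tprod_neg_slot {m : ℕ} (M N : Fin m → Matrix (Fin 2) (Fin 2) ℂ) (ν₀ : Fin m)
    (h : ∀ ν, M ν = if ν = ν₀ then -(N ν) else N ν) : tprod M = -tprod N := by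
  ext a b
  simp only [tprod, Matrix.of_apply, Matrix.neg_apply]
  rw [← Finset.prod_erase_mul _ _ (Finset.mem_univ ν₀),
      ← Finset.prod_erase_mul _ _ (Finset.mem_univ ν₀)]
  have h1 : ∀ ν ∈ Finset.univ.erase ν₀, M ν (a ν) (b ν) = N ν (a ν) (b ν) := by
    intro ν hν
    rw [h ν, if_neg (Finset.mem_erase.1 hν).1]
  rw [Finset.prod_congr rfl h1, h ν₀, if_pos rfl]
  simp [mul_comm]

-- ### decomposing Phi

/-- The slot matrices of `Phi` (with a uniform shape, also covering the odd last index). -/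
noncomputable def slotB (n : ℕ) (i : ℕ) (ν : Fin (n / 2)) : Matrix (Fin 2) (Fin 2) ℂ :=
  if i < 2 * (n / 2) then
    (if ν.val < i / 2 then matT
     else if ν.val = i / 2 then (if i % 2 = 0 then matG1 else matG2) else matE)
  else matT

/-- The scalar coefficient of `Phi`. -/
noncomputable def coefB {n : ℕ} (ε : Fin n → ℝ) (i : Fin n) : ℂ :=
  tau ε i * (if i.val < 2 * (n / 2) then 1 else Complex.I)

lemma Phi_eq {n : ℕ} (ε : Fin n → ℝ) (i : Fin n) :
    Phi ε i = coefB ε i • tprod (slotB n i.val) := by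
  unfold Phi coefB slotB
  by_cases h : i.val < 2 * (n / 2) <;> simp [h, smul_smul, mul_comm]

lemma coefB_ne_zero {n : ℕ} (ε : Fin n → ℝ) (i : Fin n) : coefB ε i ≠ 0 := by
  unfold coefB tau
  split_ifs <;> simp [Complex.I_ne_zero]

lemma slotB_anticomm {n : ℕ} {i j : ℕ} (hij : i < j) (hjn : j < n) (ν : Fin (n / 2)) :
    slotB n i ν * slotB n j ν =
      if ν.val = i / 2 then -(slotB n j ν * slotB n i ν) else slotB n j ν * slotB n i ν := by
  have hi : i < 2 * (n / 2) := by omega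
  unfold slotB
  rw [if_pos hi]
  by_cases hj : j < 2 * (n / 2)
  · rw [if_pos hj]
    rcases lt_trichotomy ν.val (i / 2) with hν | hν | hν
    · have h1 : ¬(ν.val = i / 2) := by omega
      have h2 : ν.val < j / 2 := by omega
      rw [if_pos hν, if_neg h1, if_pos h2]
    · have h1 : ¬(ν.val < i / 2) := by omega
      rw [if_neg h1, if_pos hν]
      by_cases hsame : j / 2 = i / 2
      · have hi2 : i % 2 = 0 := by omega
        have hj2 : ¬(j % 2 = 0) := by omega
        have h4 : ¬(ν.val < j / 2) := by omega
        have h5 : ν.val = j / 2 := by omega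
        rw [if_neg h4, if_pos h5, if_pos hi2, if_neg hj2, if_pos hν]
        exact matG1_matG2
      · have h4 : ν.val < j / 2 := by omega
        rw [if_pos h4]
        by_cases hi2 : i % 2 = 0
        · rw [if_pos hi2, if_pos hν]; exact matG1_matT
        · rw [if_neg hi2, if_pos hν]; exact matG2_matT
    · have h1 : ¬(ν.val < i / 2) := by omega
      have h2 : ¬(ν.val = i / 2) := by omega
      rw [if_neg h1, if_neg h2, if_neg h2]
      show matE * _ = _ * matE
      simp [matE]
  · rw [if_neg hj]
    rcases lt_trichotomy ν.val (i / 2) with hν | hν | hν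
    · have h1 : ¬(ν.val = i / 2) := by omega
      rw [if_pos hν, if_neg h1]
    · have h1 : ¬(ν.val < i / 2) := by omega
      rw [if_neg h1, if_pos hν]
      by_cases hi2 : i % 2 = 0
      · rw [if_pos hi2, if_pos hν]; exact matG1_matT
      · rw [if_neg hi2, if_pos hν]; exact matG2_matT
    · have h1 : ¬(ν.val < i / 2) := by omega
      have h2 : ¬(ν.val = i / 2) := by omega
      rw [if_neg h1, if_neg h2, if_neg h2]
      show matE * _ = _ * matE
      simp [matE]

lemma Phi_anticomm_lt {n : ℕ} (ε : Fin n → ℝ) {i j : Fin n} (hij : i < j) :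
    Phi ε i * Phi ε j = -(Phi ε j * Phi ε i) := by
  have hdiv : i.val / 2 < n / 2 := by
    have h1 : (i : ℕ) < j := hij
    have h2 := j.isLt
    omega
  rw [Phi_eq, Phi_eq, smul_mul_smul_comm, smul_mul_smul_comm, tprod_mul, tprod_mul]
  rw [tprod_neg_slot (fun ν => slotB n i.val ν * slotB n j.val ν)
    (fun ν => slotB n j.val ν * slotB n i.val ν) ⟨i.val / 2, hdiv⟩ ?_]
  · rw [smul_neg, mul_comm]
  · intro ν
    show slotB n i.val ν * slotB n j.val ν = if ν = ⟨i.val / 2, hdiv⟩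
      then -(slotB n j.val ν * slotB n i.val ν) else slotB n j.val ν * slotB n i.val ν
    rw [slotB_anticomm hij j.isLt ν]
    simp [Fin.ext_iff]

lemma Phi_anticomm {n : ℕ} (ε : Fin n → ℝ) {i j : Fin n} (hij : i ≠ j) :
    Phi ε i * Phi ε j = -(Phi ε j * Phi ε i) := by
  rcases lt_or_gt_of_ne hij with h | h
  · exact Phi_anticomm_lt ε h
  · rw [Phi_anticomm_lt ε h, neg_neg]

lemma Phi_sq {n : ℕ} (ε : Fin n → ℝ) (i : Fin n) (h : ε i = -1) :
    Phi ε i * Phi ε i = 1 := by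
  have htau : tau ε i = Complex.I := by
    unfold tau; rw [if_neg (by rw [h]; norm_num)]
  rw [Phi_eq, smul_mul_smul_comm, tprod_mul]
  by_cases hi : i.val < 2 * (n / 2)
  · have hdiv : i.val / 2 < n / 2 := by omega
    have hc : coefB ε i = Complex.I := by unfold coefB; rw [if_pos hi, htau, mul_one]
    rw [tprod_neg_slot (fun ν => slotB n i.val ν * slotB n i.val ν)
      (fun _ => (1 : Matrix (Fin 2) (Fin 2) ℂ)) ⟨i.val / 2, hdiv⟩ ?_]
    · rw [tprod_one, hc, Complex.I_mul_I]
      simp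
    · intro ν
      show slotB n i.val ν * slotB n i.val ν =
        if ν = ⟨i.val / 2, hdiv⟩ then -(1 : Matrix (Fin 2) (Fin 2) ℂ) else 1
      unfold slotB
      rw [if_pos hi]
      rcases lt_trichotomy ν.val (i.val / 2) with hν | hν | hν
      · have h2 : ¬(ν = (⟨i.val / 2, hdiv⟩ : Fin (n / 2))) := by
          simp only [Fin.ext_iff]; omega
        rw [if_pos hν, if_neg h2]
        exact matT_sq
      · have h1 : ¬(ν.val < i.val / 2) := by omega
        have h2 : ν = (⟨i.val / 2, hdiv⟩ : Fin (n / 2)) := Fin.ext hν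
        rw [if_neg h1, if_pos hν, if_pos h2]
        by_cases hi2 : i.val % 2 = 0
        · rw [if_pos hi2]; exact matG1_sq
        · rw [if_neg hi2]; exact matG2_sq
      · have h1 : ¬(ν.val < i.val / 2) := by omega
        have h2 : ¬(ν.val = i.val / 2) := by omega
        have h3 : ¬(ν = (⟨i.val / 2, hdiv⟩ : Fin (n / 2))) := by
          simp only [Fin.ext_iff]; omega
        rw [if_neg h1, if_neg h2, if_neg h3]
        show matE * matE = 1
        simp [matE]
  · have hc : coefB ε i = -1 := by
      unfold coefB; rw [if_neg hi, htau, Complex.I_mul_I]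
    have hB : (fun ν => slotB n i.val ν * slotB n i.val ν) =
        (fun _ : Fin (n / 2) => (1 : Matrix (Fin 2) (Fin 2) ℂ)) := by
      funext ν; unfold slotB; rw [if_neg hi]; exact matT_sq
    rw [hB, tprod_one, hc]
    simp

-- ### products of pairwise anticommuting involutions

lemma prod_anticomm_right {R : Type*} [Ring R] (a : R) :
    ∀ l : List R, (∀ b ∈ l, a * b = -(b * a)) →
      l.prod * a = a * l.prod ∨ l.prod * a = -(a * l.prod) := by
  intro l
  induction l with
  | nil => intro _; left; simp
  | cons b t ih =>
    intro h
    have hb : a * b = -(b * a) := h b List.mem_cons_self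
    have ht := ih fun c hc => h c (List.mem_cons_of_mem b hc)
    rw [List.prod_cons]
    rcases ht with h1 | h1
    · right
      rw [mul_assoc, h1, ← mul_assoc, ← mul_assoc]
      rw [show b * a = -(a * b) by rw [hb, neg_neg]]
      simp [mul_assoc]
    · left
      rw [mul_assoc, h1, mul_neg, ← mul_assoc]
      rw [show b * a = -(a * b) by rw [hb, neg_neg]]
      simp [mul_assoc]

lemma prod_sq_pm {R : Type*} [Ring R] :
    ∀ l : List R, l.Pairwise (fun x y => x * y = -(y * x)) → (∀ b ∈ l, b * b = 1) →
      l.prod * l.prod = 1 ∨ l.prod * l.prod = -1 := by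
  intro l
  induction l with
  | nil => intro _ _; left; simp
  | cons a t ih =>
    intro hpw hsq
    rw [List.pairwise_cons] at hpw
    have ha : a * a = 1 := hsq a List.mem_cons_self
    have ht := ih hpw.2 fun c hc => hsq c (List.mem_cons_of_mem a hc)
    have hac := prod_anticomm_right a t (fun b hb => hpw.1 b hb)
    rw [List.prod_cons]
    rcases hac with h1 | h1
    · have : a * List.prod t * (a * List.prod t) = List.prod t * List.prod t := by
        rw [mul_assoc, ← mul_assoc (List.prod t), h1, ← mul_assoc, ← mul_assoc, ha, one_mul]
      rw [this]; exact ht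
    · have : a * List.prod t * (a * List.prod t) = -(List.prod t * List.prod t) := by
        rw [mul_assoc, ← mul_assoc (List.prod t), h1, neg_mul, mul_neg, ← mul_assoc,
          ← mul_assoc, ha, one_mul]
      rw [this]
      rcases ht with h2 | h2
      · right; rw [h2]
      · left; rw [h2, neg_neg]

lemma cliffSet_negSet_sq {n : ℕ} (ε : Fin n → ℝ) :
    cliffSet ε (negSet ε) * cliffSet ε (negSet ε) = 1 ∨
      cliffSet ε (negSet ε) * cliffSet ε (negSet ε) = -1 := by
  unfold cliffSet
  apply prod_sq_pm
  · refine List.Pairwise.map (Phi ε) (fun i j hij => Phi_anticomm ε hij) ?_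
    exact ((negSet ε).sortedLT_sort).pairwise.imp ne_of_lt
  · intro b hb
    rw [List.mem_map] at hb
    obtain ⟨i, hi, rfl⟩ := hb
    rw [Finset.mem_sort] at hi
    exact Phi_sq ε i ((Finset.mem_filter.1 hi).2)

-- ### evaluation helpers

lemma flat_single {n : ℕ} (ε : Fin n → ℝ) (a b : Fin n) :
    flat ε (Pi.single a 1) (Pi.single b 1) = if a = b then ε a else 0 := by
  unfold flat
  rw [LinearMap.sum_apply]
  simp only [LinearMap.smul_apply, LinearMap.proj_apply, Pi.single_apply, smul_eq_mul]
  rw [Finset.sum_eq_single a]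
  · by_cases h : a = b <;> simp [h, eq_comm]
  · intro c _ hc
    simp [hc]
  · intro h; exact absurd (Finset.mem_univ a) h

lemma stdInner_self_eq {n : ℕ} (χ : Spinor n) :
    stdInner χ χ = ((∑ b, Complex.normSq (χ b) : ℝ) : ℂ) := by
  unfold stdInner
  push_cast
  refine Finset.sum_congr rfl fun b _ => ?_
  rw [mul_comm, Complex.mul_conj]

lemma stdInner_self_ne_zero {n : ℕ} {χ : Spinor n} (h : χ ≠ 0) : stdInner χ χ ≠ 0 := by
  rw [stdInner_self_eq]
  have : ∃ b, χ b ≠ 0 := by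
    by_contra hc
    push_neg at hc
    exact h (funext hc)
  obtain ⟨b, hb⟩ := this
  have hpos : 0 < ∑ b, Complex.normSq (χ b) := by
    apply Finset.sum_pos' (fun c _ => Complex.normSq_nonneg _)
    exact ⟨b, Finset.mem_univ b, Complex.normSq_pos.mpr hb⟩
  exact_mod_cast ne_of_gt hpos

lemma altSum_apply {n k : ℕ} {α : Type*} (s : Finset α)
    (F : α → AlternatingMap ℝ (Fin n → ℝ) ℝ (Fin k)) (v : Fin k → (Fin n → ℝ)) :
    (∑ a ∈ s, F a) v = ∑ a ∈ s, F a v := by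
  classical
  induction s using Finset.induction with
  | empty => simp
  | insert _ _ h ih =>
    rw [Finset.sum_insert h, Finset.sum_insert h, AlternatingMap.add_apply, ih]

lemma wedge1_apply {n k : ℕ} (f : Fin k → ((Fin n → ℝ) →ₗ[ℝ] ℝ)) (v : Fin k → (Fin n → ℝ)) :
    wedge1 f v = Matrix.det (Matrix.of fun i j => f j (v i)) :=
  rfl

lemma prod_negSet {n : ℕ} (ε : Fin n → ℝ) :
    (∏ i ∈ negSet ε, ((ε i : ℝ) : ℂ)) = (-1) ^ (negSet ε).card := by
  rw [Finset.prod_congr rfl (fun i hi => ?_), Finset.prod_const]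
  have : ε i = -1 := (Finset.mem_filter.1 hi).2
  rw [this]; push_cast; ring

lemma stdInner_neg_left {n : ℕ} (u v : Spinor n) : stdInner (-u) v = -stdInner u v := by
  unfold stdInner
  rw [← Finset.sum_neg_distrib]
  exact Finset.sum_congr rfl fun b _ => by simp

lemma dCoeff_negSet_ne_zero {n : ℕ} (ε : Fin n → ℝ) (dD : ℂ) (hdD : ∃ k : ℕ, dD = Complex.I ^ k)
    (dk : ℂ) (hdk : ∃ k : ℕ, dk = Complex.I ^ k) {χ : Spinor n} (hχ : χ ≠ 0) :
    dCoeff ε dD dk (negSet ε) χ ≠ 0 := by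
  obtain ⟨k1, rfl⟩ := hdD
  obtain ⟨k2, rfl⟩ := hdk
  unfold dCoeff sform
  rw [Matrix.mulVec_mulVec]
  have hS := stdInner_self_ne_zero hχ
  have hI1 : (Complex.I : ℂ) ^ k1 ≠ 0 := pow_ne_zero _ Complex.I_ne_zero
  have hI2 : (Complex.I : ℂ) ^ k2 ≠ 0 := pow_ne_zero _ Complex.I_ne_zero
  have hpr : (∏ i ∈ negSet ε, ((ε i : ℝ) : ℂ)) ≠ 0 := by
    rw [prod_negSet]
    exact pow_ne_zero _ (by norm_num)
  rcases cliffSet_negSet_sq ε with h | h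
  · rw [h, Matrix.one_mulVec]
    exact mul_ne_zero (mul_ne_zero hI2 hpr) (mul_ne_zero hI1 hS)
  · rw [h, show (-1 : Matrix (Fin (n / 2) → Fin 2) (Fin (n / 2) → Fin 2) ℂ) = -(1 : Matrix _ _ ℂ)
      from rfl, Matrix.neg_mulVec, Matrix.one_mulVec, stdInner_neg_left]
    exact mul_ne_zero (mul_ne_zero hI2 hpr) (mul_ne_zero hI1 (neg_ne_zero.2 hS))

lemma diracForm_apply_neg {n p : ℕ} (ε : Fin n → ℝ) (hp : (negSet ε).card = p)
    (dD dk : ℂ) (χ : Spinor n) :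
    diracForm ε dD dk p χ (fun j => Pi.single ((negSet ε).orderEmbOfFin hp j) 1) =
      (dCoeff ε dD dk (negSet ε) χ).re * (-1) ^ p := by
  classical
  set t := (negSet ε).orderEmbOfFin hp with ht
  unfold diracForm
  rw [altSum_apply]
  rw [Finset.sum_eq_single (negSet ε)]
  · rw [dif_pos hp, AlternatingMap.smul_apply, wedge1_apply]
    have hM : (Matrix.of fun i j => flat ε (Pi.single (t j) 1) (Pi.single (t i) 1)) =
        -(1 : Matrix (Fin p) (Fin p) ℝ) := by
      ext i j
      rw [Matrix.of_apply, flat_single]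
      have hmem : (t i : Fin n) ∈ negSet ε := Finset.orderEmbOfFin_mem _ hp i
      have hεt : ε (t i) = -1 := (Finset.mem_filter.1 hmem).2
      by_cases hij : j = i
      · subst hij
        simp [hεt, Matrix.one_apply]
      · have : ¬((t j : Fin n) = t i) := fun hc => hij (t.injective hc)
        simp [this, Matrix.one_apply, Ne.symm hij]
    rw [hM, show (-(1 : Matrix (Fin p) (Fin p) ℝ)).det = (-1 : ℝ) ^ p by
      rw [Matrix.det_neg, Matrix.det_one, Fintype.card_fin, mul_one]]
    rw [smul_eq_mul]
  · intro s _ hs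
    by_cases hc : s.card = p
    · rw [dif_pos hc, AlternatingMap.smul_apply, wedge1_apply]
      have hsub : ¬(s ⊆ negSet ε) := by
        intro hsub
        exact hs (Finset.eq_of_subset_of_card_le hsub (by rw [hp, hc]))
      obtain ⟨a, ha, hna⟩ := Finset.not_subset.1 hsub
      have hrng : a ∈ Set.range ⇑(s.orderEmbOfFin hc) := by
        rw [Finset.range_orderEmbOfFin]; exact ha
      obtain ⟨j₀, hj₀⟩ := hrng
      rw [Matrix.det_eq_zero_of_column_eq_zero j₀, smul_zero]
      intro i
      rw [Matrix.of_apply, flat_single]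
      have hmem : (t i : Fin n) ∈ negSet ε := Finset.orderEmbOfFin_mem _ hp i
      have : ¬(s.orderEmbOfFin hc j₀ = t i) := by
        rw [hj₀]; intro hc2; exact hna (hc2 ▸ hmem)
      rw [if_neg this]
    · rw [dif_neg hc, AlternatingMap.zero_apply]
  · intro hmem
    exact absurd (Finset.mem_univ _) hmem

end Aux

theorem dirac_p_form_vanishes_iff_zero
    (n p : ℕ) (ε : Fin n → ℝ) (hε : ∀ i, ε i = 1 ∨ ε i = -1)
    (hp : (negSet ε).card = p)
    -- `dD` is a fixed power of `i` making the spinor inner product Hermitian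
    (dD : ℂ) (hdD : ∃ k : ℕ, dD = Complex.I ^ k)
    (hherm : ∀ u v : Spinor n, sform ε dD v u = (starRingEnd ℂ) (sform ε dD u v))
    -- `dk = d_{p,p}` is a fixed (nonzero) power of `i` making the Dirac `p`-forms real
    (dk : ℂ) (hdk : ∃ k : ℕ, dk = Complex.I ^ k)
    (hreal : ∀ (χ : Spinor n) (s : Finset (Fin n)), s.card = p →
      (dCoeff ε dD dk s χ).im = 0) :
    ∀ χ : Spinor n, diracForm ε dD dk p χ = 0 ↔ χ = 0 := by
  intro χ
  constructor
  · intro h0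
    by_contra hχ
    have h1 := congrArg
      (fun F : AlternatingMap ℝ (Fin n → ℝ) ℝ (Fin p) =>
        F (fun j => Pi.single ((negSet ε).orderEmbOfFin hp j) 1)) h0
    simp only [AlternatingMap.zero_apply] at h1
    rw [diracForm_apply_neg ε hp dD dk χ] at h1
    have hne := dCoeff_negSet_ne_zero ε dD hdD dk hdk hχ
    have him := hreal χ (negSet ε) hp
    have hre : (dCoeff ε dD dk (negSet ε) χ).re ≠ 0 := by
      intro hre
      exact hne (Complex.ext hre him)
    have hpow : ((-1 : ℝ)) ^ p ≠ 0 := pow_ne_zero _ (by norm_num)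
    exact hre (by
      rcases mul_eq_zero.1 h1 with h | h
      · exact h
      · exact absurd h hpow)
  · rintro rfl
    unfold diracForm
    apply Finset.sum_eq_zero
    intro s _
    have hz : dCoeff ε dD dk s (0 : Spinor n) = 0 := by
      unfold dCoeff sform stdInner
      simp
    split
    · rw [hz]; simp
    · rfl

end Paper
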